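/- Let d ≥ 2, 0 < p ≤ 1, and let ρ_m = p|φ_d⟩⟨φ_d| + ((1−p)/d) I_d, where |φ_d⟩ = (1/√d) Σ_{i=0}^{d−1} |i⟩. Then for every λ ≥ 0 and every d×d diagonal density matrix δ, one has ‖ρ_m − λδ‖_tr ≥ ‖ p|φ_d⟩⟨φ_d| + ((1−p−λ)/d) I_d ‖_tr = |p + (1−p−λ)/d| + (d−1)|(1−p−λ)/d| ≥ p. -/

import Mathlib

open Matrix
open scoped ComplexOrder

/-- The trace norm of a matrix `A`: `‖A‖_tr = Tr √(AᴴA)`. -/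
noncomputable def traceNorm {d : ℕ} (A : Matrix (Fin d) (Fin d) ℂ) : ℝ :=
  (((Matrix.posSemidef_conjTranspose_mul_self A).1.eigenvectorUnitary : Matrix (Fin d) (Fin d) ℂ) *
    Matrix.diagonal (((↑) : ℝ → ℂ) ∘ Real.sqrt ∘ (Matrix.posSemidef_conjTranspose_mul_self A).1.eigenvalues) *
    (star (Matrix.posSemidef_conjTranspose_mul_self A).1.eigenvectorUnitary : Matrix (Fin d) (Fin d) ℂ)).trace.re

/-- The maximally coherent state `|φ_d⟩ = (1/√d) Σ_i |i⟩`. -/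
noncomputable def phi (d : ℕ) : Fin d → ℂ :=
  fun _ => ((Real.sqrt d : ℂ))⁻¹

/-- The maximally coherent mixed state `ρ_m = p|φ_d⟩⟨φ_d| + ((1−p)/d) I_d`. -/
noncomputable def mcms (d : ℕ) (p : ℝ) : Matrix (Fin d) (Fin d) ℂ :=
  p • Matrix.vecMulVec (phi d) (star (phi d)) + ((1 - p) / d : ℝ) • 1

open scoped MatrixOrder in
lemma traceNorm_eq_of_sq {d : ℕ} (X B : Matrix (Fin d) (Fin d) ℂ)
    (hB : B.PosSemidef) (h : B ^ 2 = Xᴴ * X) : traceNorm X = B.trace.re := by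
  have hA := posSemidef_conjTranspose_mul_self X
  have key : CFC.sqrt (Xᴴ * X) = B := by
    exact (CFC.sqrt_eq_iff _ _ hA.nonneg hB.nonneg).mpr (by rw [← sq, h])
  rw [CFC.sqrt_eq_cfc, cfc_nnreal_eq_real _ _ hA.nonneg, hA.1.cfc_eq] at key
  rw [traceNorm, ← key]
  simp only [IsHermitian.cfc]
  congr 3
  congr 1
  funext i
  congr 1
  funext j
  simp [Real.coe_sqrt, Real.coe_toNNReal', max_eq_left (hA.eigenvalues_nonneg j)]

lemma unitary_entry_abs_le {d : ℕ} (W : Matrix (Fin d) (Fin d) ℂ)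
    (hW : W ∈ Matrix.unitaryGroup (Fin d) ℂ) (i : Fin d) : ‖W i i‖ ≤ 1 := by
  have h1 : (star W * W) i i = 1 := by rw [mem_unitaryGroup_iff'.mp hW]; simp
  have h2 : ∑ k, Complex.normSq (W k i) = 1 := by
    have := congrArg Complex.re h1
    simp only [Matrix.mul_apply, Matrix.star_apply, Complex.re_sum, Complex.one_re] at this
    rw [← this]
    congr 1; ext k
    rw [show star (W k i) * W k i = (starRingEnd ℂ) (W k i) * W k i from rfl,
      ← Complex.normSq_eq_conj_mul_self]
    simp
  have h3 : Complex.normSq (W i i) ≤ 1 := by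
    rw [← h2]
    exact Finset.single_le_sum (f := fun k => Complex.normSq (W k i))
      (fun k _ => Complex.normSq_nonneg _) (Finset.mem_univ i)
  have := Complex.sq_norm (W i i)
  nlinarith [norm_nonneg (W i i)]

lemma re_trace_mul_le_traceNorm {d : ℕ} (X Q : Matrix (Fin d) (Fin d) ℂ)
    (hX : X.IsHermitian) (hQ : Q ∈ Matrix.unitaryGroup (Fin d) ℂ) :
    ((Q * X).trace).re ≤ traceNorm X := by
  classical
  set U : Matrix (Fin d) (Fin d) ℂ := (hX.eigenvectorUnitary : Matrix (Fin d) (Fin d) ℂ) with hUdef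
  have hU : U ∈ Matrix.unitaryGroup (Fin d) ℂ := hX.eigenvectorUnitary.2
  have hUU : star U * U = 1 := mem_unitaryGroup_iff'.mp hU
  have hUU' : U * star U = 1 := mem_unitaryGroup_iff.mp hU
  set eig : Fin d → ℝ := hX.eigenvalues with heig
  set D : Matrix (Fin d) (Fin d) ℂ := diagonal (Complex.ofReal ∘ eig) with hD
  set E : Matrix (Fin d) (Fin d) ℂ := diagonal (fun i => ((|eig i| : ℝ) : ℂ)) with hE
  have hspec : X = U * D * star U := hX.spectral_theorem
  set B : Matrix (Fin d) (Fin d) ℂ := U * E * star U with hB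
  have hBpsd : B.PosSemidef := by
    have : (diagonal (fun i => ((|eig i| : ℝ) : ℂ))).PosSemidef := by
      rw [posSemidef_diagonal_iff]
      intro i
      simp [Complex.zero_le_real, abs_nonneg]
    simpa [hB, Matrix.star_eq_conjTranspose] using this.mul_mul_conjTranspose_same U
  have hB2 : B ^ 2 = Xᴴ * X := by
    rw [hX.eq, hspec, hB, pow_two]
    calc U * E * star U * (U * E * star U) = U * (E * (star U * U) * E) * star U := by
          noncomm_ring
      _ = U * (D * (star U * U) * D) * star U := by
          rw [hUU]
          congr 1
          congr 1
          simp only [mul_one, hE, hD, diagonal_mul_diagonal]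
          congr 1
          ext i
          simp [← Complex.ofReal_mul, abs_mul_abs_self]
      _ = U * D * star U * (U * D * star U) := by noncomm_ring
  have htrB : B.trace = ∑ i, ((|eig i| : ℝ) : ℂ) := by
    rw [hB, trace_mul_cycle, hUU, one_mul, hE, trace_diagonal]
  have hTN : traceNorm X = ∑ i, |eig i| := by
    rw [traceNorm_eq_of_sq X B hBpsd hB2, htrB]
    simp
  set W : Matrix (Fin d) (Fin d) ℂ := star U * Q * U with hW
  have hWmem : W ∈ Matrix.unitaryGroup (Fin d) ℂ :=
    Submonoid.mul_mem _ (Submonoid.mul_mem _ (Unitary.star_mem hU) hQ) hU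
  have htrQX : (Q * X).trace = (W * D).trace := by
    rw [hspec, hW]
    rw [show Q * (U * D * star U) = (Q * U * D) * star U by noncomm_ring,
      trace_mul_comm]
    congr 1
    noncomm_ring
  have hWD : (W * D).trace = ∑ i, W i i * ((eig i : ℝ) : ℂ) := by
    simp [Matrix.trace, Matrix.diag, Matrix.mul_diagonal, hD]
  rw [htrQX, hWD, hTN]
  rw [Complex.re_sum]
  apply Finset.sum_le_sum
  intro i _
  have h1 : ‖W i i‖ ≤ 1 := unitary_entry_abs_le W hWmem i
  have h2 : (W i i * ((eig i : ℝ) : ℂ)).re = (W i i).re * eig i := by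
    simp [Complex.mul_re]
  rw [h2]
  have h3 : |(W i i).re| ≤ 1 := le_trans (Complex.abs_re_le_norm _) h1
  calc (W i i).re * eig i ≤ |(W i i).re * eig i| := le_abs_self _
    _ = |(W i i).re| * |eig i| := abs_mul _ _
    _ ≤ 1 * |eig i| := by gcongr
    _ = |eig i| := one_mul _

lemma posSemidef_real_smul {d : ℕ} {A : Matrix (Fin d) (Fin d) ℂ} (hA : A.PosSemidef)
    {r : ℝ} (hr : 0 ≤ r) : (((r : ℂ)) • A).PosSemidef := by
  constructor
  · rw [Matrix.IsHermitian, conjTranspose_smul, hA.1.eq]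
    congr 1
    simp [Complex.conj_ofReal]
  · exact (hA.smul (Complex.zero_le_real.mpr hr)).2

set_option maxHeartbeats 2000000 in
/-- For every `λ ≥ 0` and every diagonal density matrix `δ`,
`‖ρ_m − λδ‖_tr ≥ ‖p|φ_d⟩⟨φ_d| + ((1−p−λ)/d) I_d‖_tr = |p + (1−p−λ)/d| + (d−1)|(1−p−λ)/d| ≥ p`. -/
theorem traceNorm_mcms_sub_smul_diag_ge {d : ℕ} (hd : 2 ≤ d) (p : ℝ)
    (hp0 : 0 < p) (hp1 : p ≤ 1) (l : ℝ) (hl : 0 ≤ l)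
    (δ : Matrix (Fin d) (Fin d) ℂ)
    (hδ : δ.PosSemidef) (hδtr : δ.trace = 1) (hδdiag : δ.IsDiag) :
    traceNorm (mcms d p - l • δ)
        ≥ traceNorm (p • Matrix.vecMulVec (phi d) (star (phi d))
            + ((1 - p - l) / d : ℝ) • 1) ∧
    traceNorm (p • Matrix.vecMulVec (phi d) (star (phi d))
            + ((1 - p - l) / d : ℝ) • 1)
        = |p + (1 - p - l) / d| + (d - 1) * |(1 - p - l) / d| ∧
    |p + (1 - p - l) / d| + (d - 1) * |(1 - p - l) / d| ≥ p := by
  have hdR : (2:ℝ) ≤ (d:ℝ) := by exact_mod_cast hd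
  have hdpos : (0:ℝ) < d := by linarith
  have hdC : (d:ℂ) ≠ 0 := by
    simp only [ne_eq, Nat.cast_eq_zero]
    omega
  have hdR0 : (d:ℝ) ≠ 0 := by positivity
  obtain ⟨c, hc⟩ : ∃ c : ℝ, c = (1 - p - l) / d := ⟨_, rfl⟩
  obtain ⟨b, hb⟩ : ∃ b : ℝ, b = (1 - p) / d := ⟨_, rfl⟩
  set R : Matrix (Fin d) (Fin d) ℂ := Matrix.of (fun _ _ => (d:ℂ)⁻¹) with hR
  -- basic facts about R
  have rsmul : ∀ (r : ℝ) (A : Matrix (Fin d) (Fin d) ℂ), r • A = (r:ℂ) • A := by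
    intro r A
    ext i j
    simp [Matrix.smul_apply, Complex.real_smul]
  have hP : Matrix.vecMulVec (phi d) (star (phi d)) = R := by
    ext i j
    simp only [Matrix.vecMulVec_apply, Pi.star_apply, phi, hR, Matrix.of_apply]
    rw [star_inv₀, Complex.star_def, Complex.conj_ofReal, ← mul_inv, ← Complex.ofReal_mul,
      Real.mul_self_sqrt (by positivity)]
    push_cast
    ring
  have hRH : Rᴴ = R := by
    ext i j
    simp [hR, Matrix.conjTranspose_apply, Complex.conj_ofReal]
  have hRR : R * R = R := by
    ext i j
    simp only [Matrix.mul_apply, hR, Matrix.of_apply, Finset.sum_const, Finset.card_univ,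
      Fintype.card_fin, nsmul_eq_mul]
    field_simp
  have htrR : R.trace = 1 := by
    simp only [Matrix.trace, Matrix.diag, hR, Matrix.of_apply, Finset.sum_const,
      Finset.card_univ, Fintype.card_fin, nsmul_eq_mul]
    field_simp
  have htr1 : (1 : Matrix (Fin d) (Fin d) ℂ).trace = (d:ℂ) := by simp
  have hmul : ∀ a b a' b' : ℂ, ((a • R + b • (1 : Matrix (Fin d) (Fin d) ℂ)) *
      (a' • R + b' • 1)) = (a*a' + a*b' + b*a') • R + (b*b') • 1 := by
    intro a b a' b'
    simp only [add_mul, mul_add, smul_mul_assoc, mul_smul_comm, hRR, mul_one, one_mul,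
      smul_smul]
    module
  have hRpsd : R.PosSemidef := by
    have h : Rᴴ * R = R := by rw [hRH, hRR]
    exact h ▸ posSemidef_conjTranspose_mul_self R
  have h1Rpsd : ((1:Matrix (Fin d) (Fin d) ℂ) - R).PosSemidef := by
    have h : (1 - R)ᴴ * (1 - R) = 1 - R := by
      rw [conjTranspose_sub, conjTranspose_one, hRH, sub_mul, mul_sub, mul_sub, hRR]
      noncomm_ring
    exact h ▸ posSemidef_conjTranspose_mul_self (1 - R)
  -- the matrix M in the middle statement
  set M : Matrix (Fin d) (Fin d) ℂ := (p:ℂ) • R + (c:ℂ) • 1 with hM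
  have hMstmt : p • Matrix.vecMulVec (phi d) (star (phi d)) + ((1 - p - l) / d : ℝ) • 1 = M := by
    rw [hP, rsmul, rsmul, hM, ← hc]
  -- Part 2 : traceNorm M = |p+c| + (d-1)|c|
  have hMH : Mᴴ = M := by
    rw [hM, conjTranspose_add, conjTranspose_smul, conjTranspose_smul, hRH, conjTranspose_one]
    simp [Complex.star_def, Complex.conj_ofReal]
  set B : Matrix (Fin d) (Fin d) ℂ := ((|p+c| - |c| : ℝ):ℂ) • R + ((|c|:ℝ):ℂ) • 1 with hBdef
  have hBalt : B = ((|p+c|:ℝ):ℂ) • R + ((|c|:ℝ):ℂ) • (1 - R) := by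
    rw [hBdef, smul_sub]
    push_cast
    module
  have hBpsd : B.PosSemidef := by
    rw [hBalt]
    exact (posSemidef_real_smul hRpsd (abs_nonneg _)).add
      (posSemidef_real_smul h1Rpsd (abs_nonneg _))
  have hB2 : B ^ 2 = Mᴴ * M := by
    rw [hMH, hM, hBdef, pow_two, hmul, hmul]
    have hreal : (|p+c| - |c|) * (|p+c| - |c|) + (|p+c| - |c|) * |c| + |c| * (|p+c| - |c|)
        = p*p + p*c + c*p := by
      nlinarith [abs_mul_abs_self (p+c), abs_mul_abs_self c]
    have e1 : (((|p+c| - |c| :ℝ):ℂ) * ((|p+c| - |c| :ℝ):ℂ) + ((|p+c| - |c| :ℝ):ℂ) * ((|c|:ℝ):ℂ)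
        + ((|c|:ℝ):ℂ) * ((|p+c| - |c| :ℝ):ℂ)) = ((p:ℂ)*(p:ℂ) + (p:ℂ)*(c:ℂ) + (c:ℂ)*(p:ℂ)) := by
      exact_mod_cast congrArg Complex.ofReal hreal
    have e2 : (((|c|:ℝ):ℂ) * ((|c|:ℝ):ℂ)) = ((c:ℂ)*(c:ℂ)) := by
      exact_mod_cast congrArg Complex.ofReal (abs_mul_abs_self c)
    rw [e1, e2]
  have htrB : B.trace = (((|p+c| - |c|) + |c| * d : ℝ) : ℂ) := by
    rw [hBdef, trace_add, trace_smul, trace_smul, htrR, htr1]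
    simp only [smul_eq_mul, mul_one]
    push_cast
    ring
  have part2 : traceNorm M = |p + c| + ((d:ℝ) - 1) * |c| := by
    rw [traceNorm_eq_of_sq M B hBpsd hB2, htrB, Complex.ofReal_re]
    ring
  -- Part 3
  have part3 : |p + c| + ((d:ℝ) - 1) * |c| ≥ p := by
    have h1 : p - |c| ≤ |p + c| := by
      have := abs_add_le (p + c) (-c)
      simp only [add_neg_cancel_right, abs_neg] at this
      have := le_abs_self p
      linarith
    nlinarith [abs_nonneg c]
  -- Part 1
  obtain ⟨s, hs⟩ : ∃ s : ℝ, s = if 0 ≤ p + c then (1:ℝ) else -1 := ⟨_, rfl⟩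
  obtain ⟨t, ht⟩ : ∃ t : ℝ, t = if 0 ≤ c then (1:ℝ) else -1 := ⟨_, rfl⟩
  have hs2 : s * s = 1 := by rw [hs]; split <;> norm_num
  have ht2 : t * t = 1 := by rw [ht]; split <;> norm_num
  have hsabs : s * (p + c) = |p + c| := by
    rw [hs]; split
    · rw [one_mul, abs_of_nonneg ‹_›]
    · rw [neg_one_mul, abs_of_neg (by linarith [not_le.mp ‹_›])]
  have htabs : t * c = |c| := by
    rw [ht]; split
    · rw [one_mul, abs_of_nonneg ‹_›]
    · rw [neg_one_mul, abs_of_neg (by linarith [not_le.mp ‹_›])]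
  set Q : Matrix (Fin d) (Fin d) ℂ := ((s - t : ℝ):ℂ) • R + ((t:ℝ):ℂ) • 1 with hQdef
  have hQH : Qᴴ = Q := by
    rw [hQdef, conjTranspose_add, conjTranspose_smul, conjTranspose_smul, hRH, conjTranspose_one]
    simp [Complex.star_def, Complex.conj_ofReal]
  have hQmem : Q ∈ Matrix.unitaryGroup (Fin d) ℂ := by
    rw [mem_unitaryGroup_iff']
    rw [Matrix.star_eq_conjTranspose, hQH, hQdef, hmul]
    have hreal : (s-t)*(s-t) + (s-t)*t + t*(s-t) = (0:ℝ) := by nlinarith [hs2, ht2]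
    have e1 : (((s - t : ℝ):ℂ) * ((s - t : ℝ):ℂ) + ((s - t : ℝ):ℂ) * ((t:ℝ):ℂ)
        + ((t:ℝ):ℂ) * ((s - t : ℝ):ℂ)) = 0 := by
      exact_mod_cast congrArg Complex.ofReal hreal
    have e2 : (((t:ℝ):ℂ) * ((t:ℝ):ℂ)) = 1 := by
      rw [← Complex.ofReal_mul, ht2, Complex.ofReal_one]
    rw [e1, e2, zero_smul, one_smul, zero_add]
  set X : Matrix (Fin d) (Fin d) ℂ := mcms d p - l • δ with hXdef
  have hXeq : X = (p:ℂ) • R + (b:ℂ) • 1 - (l:ℂ) • δ := by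
    rw [hXdef, mcms, hP, rsmul, rsmul, rsmul, hb]
  have hXH : X.IsHermitian := by
    rw [Matrix.IsHermitian, hXeq, conjTranspose_sub, conjTranspose_add, conjTranspose_smul,
      conjTranspose_smul, conjTranspose_smul, hRH, conjTranspose_one, hδ.1.eq]
    simp [Complex.star_def, Complex.conj_ofReal]
  have htrRδ : (R * δ).trace = (d:ℂ)⁻¹ := by
    have : (R * δ).trace = (d:ℂ)⁻¹ * ∑ i, ∑ k, δ k i := by
      simp only [Matrix.trace, Matrix.diag, Matrix.mul_apply, hR, Matrix.of_apply,
        Finset.mul_sum]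
    rw [this]
    have hsum : ∑ i, ∑ k, δ k i = δ.trace := by
      rw [Matrix.trace]
      congr 1
      ext i
      rw [Matrix.diag]
      exact Finset.sum_eq_single i (fun k _ hk => hδdiag hk) (by simp)
    rw [hsum, hδtr, mul_one]
  have htrX : X.trace = ((p:ℂ) + (b:ℂ) * d - (l:ℂ)) := by
    rw [hXeq, trace_sub, trace_add, trace_smul, trace_smul, trace_smul, htrR, htr1, hδtr]
    simp [smul_eq_mul]
  have htrRX : (R * X).trace = ((p:ℂ) + (b:ℂ) - (l:ℂ) * (d:ℂ)⁻¹) := by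
    have hexp : R * X = (p:ℂ) • R + (b:ℂ) • R - (l:ℂ) • (R * δ) := by
      rw [hXeq, mul_sub, mul_add, mul_smul_comm, mul_smul_comm, mul_smul_comm, hRR, mul_one]
    rw [hexp, trace_sub, trace_add, trace_smul, trace_smul, trace_smul, htrR, htrRδ]
    simp [smul_eq_mul]
  have hQX : (Q * X).trace = ((s - t : ℝ):ℂ) * ((p:ℂ) + (b:ℂ) - (l:ℂ) * (d:ℂ)⁻¹)
      + ((t:ℝ):ℂ) * ((p:ℂ) + (b:ℂ) * d - (l:ℂ)) := by
    rw [hQdef, add_mul, smul_mul_assoc, smul_mul_assoc, one_mul, trace_add, trace_smul,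
      trace_smul, htrRX, htrX]
    simp [smul_eq_mul]
  have hQXre : ((Q * X).trace).re = |p + c| + ((d:ℝ) - 1) * |c| := by
    have key : (s - t) * (p + b - l * (d:ℝ)⁻¹) + t * (p + b * d - l)
        = |p + c| + ((d:ℝ) - 1) * |c| := by
      rw [← hsabs, ← htabs, hb, hc]
      field_simp
      ring
    have key2 : ((s - t : ℝ):ℂ) * ((p:ℂ) + (b:ℂ) - (l:ℂ) * (d:ℂ)⁻¹)
        + ((t:ℝ):ℂ) * ((p:ℂ) + (b:ℂ) * d - (l:ℂ))
        = ((|p + c| + ((d:ℝ) - 1) * |c| : ℝ) : ℂ) := by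
      rw [← key]
      push_cast
      ring
    rw [hQX, key2, Complex.ofReal_re]
  have part1 : traceNorm X ≥ traceNorm M := by
    rw [part2, ← hQXre]
    exact re_trace_mul_le_traceNorm X Q hXH hQmem
  rw [hMstmt]
  refine ⟨part1, ?_, ?_⟩
  · rw [part2, hc]
  · rw [← hc]; exact part3
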